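/- arXiv:0807.3694 — 3 statements merged into one kernel-verified Lean document; each statement's English description precedes it below -/
import Mathlib

section
/- For n ≥ 2, define φ(t) = ∫_0^t (1+τ²)^{-n/2} dτ and Φ(ξ) = √( (1+ξ²)^{-n} + ( (n-1)·φ(ξ) + ξ·(1+ξ²)^{-n/2} )² ). Then Φ(ξ)·Φ'(ξ) = n(n-1)·φ(ξ)/(1+ξ²)^{(n+2)/2} for all ξ ≥ 0; in particular Φ is monotone nondecreasing on [0,∞). -/
open MeasureTheory

theorem Phi_mul_deriv_and_monotone (n : ℕ) (hn : 2 ≤ n) (φ Φ : ℝ → ℝ)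
    (hφ : ∀ t : ℝ, φ t = ∫ τ in (0:ℝ)..t, (1 + τ ^ 2) ^ (-(n : ℝ) / 2))
    (hΦ : ∀ ξ : ℝ, Φ ξ = Real.sqrt ((1 + ξ ^ 2) ^ (-(n : ℝ)) +
      (((n : ℝ) - 1) * φ ξ + ξ * (1 + ξ ^ 2) ^ (-(n : ℝ) / 2)) ^ 2)) :
    (∀ ξ : ℝ, 0 ≤ ξ →
      Φ ξ * deriv Φ ξ = (n : ℝ) * ((n : ℝ) - 1) * φ ξ / (1 + ξ ^ 2) ^ (((n : ℝ) + 2) / 2)) ∧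
    MonotoneOn Φ (Set.Ici 0) := by
  have hx : ∀ ξ : ℝ, (0:ℝ) < 1 + ξ ^ 2 := fun ξ => by positivity
  set G : ℝ → ℝ := fun ξ => (1 + ξ ^ 2) ^ (-(n : ℝ)) +
      (((n : ℝ) - 1) * φ ξ + ξ * (1 + ξ ^ 2) ^ (-(n : ℝ) / 2)) ^ 2 with hGdef
  have hΦfun : Φ = fun ξ => Real.sqrt (G ξ) := funext hΦ
  have hGpos : ∀ ξ : ℝ, 0 < G ξ := by
    intro ξ
    have h1 : (0:ℝ) < (1 + ξ ^ 2) ^ (-(n : ℝ)) := Real.rpow_pos_of_pos (hx ξ) _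
    have h2 : (0:ℝ) ≤ (((n : ℝ) - 1) * φ ξ + ξ * (1 + ξ ^ 2) ^ (-(n : ℝ) / 2)) ^ 2 := sq_nonneg _
    simpa [hGdef] using add_pos_of_pos_of_nonneg h1 h2
  have hcont : Continuous fun τ : ℝ => (1 + τ ^ 2) ^ (-(n : ℝ) / 2) := by
    apply Continuous.rpow_const (by continuity)
    intro τ; exact Or.inl (ne_of_gt (hx τ))
  have hφdiff : ∀ ξ : ℝ, HasDerivAt φ ((1 + ξ ^ 2) ^ (-(n : ℝ) / 2)) ξ := by
    intro ξ
    have := (hcont.integral_hasStrictDerivAt 0 ξ).hasDerivAt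
    have hfun : φ = fun t => ∫ τ in (0:ℝ)..t, (1 + τ ^ 2) ^ (-(n : ℝ) / 2) := funext hφ
    rw [hfun]; exact this
  -- derivative of G
  have hb : ∀ ξ : ℝ, HasDerivAt (fun ξ : ℝ => 1 + ξ ^ 2) (2 * ξ) ξ := by
    intro ξ
    simpa using (hasDerivAt_pow 2 ξ).const_add 1
  have h1 : ∀ ξ : ℝ, HasDerivAt (fun ξ : ℝ => (1 + ξ ^ 2) ^ (-(n : ℝ)))
      (2 * ξ * (-(n : ℝ)) * (1 + ξ ^ 2) ^ (-(n : ℝ) - 1)) ξ := fun ξ =>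
    (hb ξ).rpow_const (Or.inl (ne_of_gt (hx ξ)))
  have h2 : ∀ ξ : ℝ, HasDerivAt (fun ξ : ℝ => (1 + ξ ^ 2) ^ (-(n : ℝ) / 2))
      (2 * ξ * (-(n : ℝ) / 2) * (1 + ξ ^ 2) ^ (-(n : ℝ) / 2 - 1)) ξ := fun ξ =>
    (hb ξ).rpow_const (Or.inl (ne_of_gt (hx ξ)))
  have hA : ∀ ξ : ℝ, HasDerivAt (fun ξ : ℝ => ((n : ℝ) - 1) * φ ξ + ξ * (1 + ξ ^ 2) ^ (-(n : ℝ) / 2))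
      (((n : ℝ) - 1) * ((1 + ξ ^ 2) ^ (-(n : ℝ) / 2)) +
        (1 * ((1 + ξ ^ 2) ^ (-(n : ℝ) / 2)) +
          ξ * (2 * ξ * (-(n : ℝ) / 2) * (1 + ξ ^ 2) ^ (-(n : ℝ) / 2 - 1)))) ξ := fun ξ =>
    (((hφdiff ξ).const_mul _).add ((hasDerivAt_id ξ).mul (h2 ξ)))
  have hG : ∀ ξ : ℝ, HasDerivAt G
      (2 * ξ * (-(n : ℝ)) * (1 + ξ ^ 2) ^ (-(n : ℝ) - 1) +
        (2 : ℕ) * (((n : ℝ) - 1) * φ ξ + ξ * (1 + ξ ^ 2) ^ (-(n : ℝ) / 2)) ^ (2 - 1) *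
          (((n : ℝ) - 1) * ((1 + ξ ^ 2) ^ (-(n : ℝ) / 2)) +
            (1 * ((1 + ξ ^ 2) ^ (-(n : ℝ) / 2)) +
              ξ * (2 * ξ * (-(n : ℝ) / 2) * (1 + ξ ^ 2) ^ (-(n : ℝ) / 2 - 1))))) ξ := fun ξ =>
    (h1 ξ).add ((hA ξ).pow 2)
  have hΦdiff : ∀ ξ : ℝ, HasDerivAt Φ
      ((2 * ξ * (-(n : ℝ)) * (1 + ξ ^ 2) ^ (-(n : ℝ) - 1) +
        (2 : ℕ) * (((n : ℝ) - 1) * φ ξ + ξ * (1 + ξ ^ 2) ^ (-(n : ℝ) / 2)) ^ (2 - 1) *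
          (((n : ℝ) - 1) * ((1 + ξ ^ 2) ^ (-(n : ℝ) / 2)) +
            (1 * ((1 + ξ ^ 2) ^ (-(n : ℝ) / 2)) +
              ξ * (2 * ξ * (-(n : ℝ) / 2) * (1 + ξ ^ 2) ^ (-(n : ℝ) / 2 - 1))))) /
        (2 * Real.sqrt (G ξ))) ξ := by
    intro ξ
    rw [hΦfun]
    exact (hG ξ).sqrt (ne_of_gt (hGpos ξ))
  -- rpow bookkeeping
  have key : ∀ ξ : ℝ, Φ ξ * deriv Φ ξ =
      (n : ℝ) * ((n : ℝ) - 1) * φ ξ / (1 + ξ ^ 2) ^ (((n : ℝ) + 2) / 2) := by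
    intro ξ
    have hsq : Real.sqrt (G ξ) ≠ 0 := Real.sqrt_ne_zero'.2 (hGpos ξ)
    have hd := (hΦdiff ξ).deriv
    rw [hd, hΦ ξ]
    rw [show (1 + ξ ^ 2) ^ (-(n : ℝ)) +
      (((n : ℝ) - 1) * φ ξ + ξ * (1 + ξ ^ 2) ^ (-(n : ℝ) / 2)) ^ 2 = G ξ from rfl]
    set u : ℝ := (1 + ξ ^ 2) ^ (-(n : ℝ) / 2 - 1) with hu
    have hxpos := hx ξ
    have e1 : (1 + ξ ^ 2) ^ (-(n : ℝ) / 2) = u * (1 + ξ ^ 2) := by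
      have h : (-(n : ℝ) / 2) = (-(n : ℝ) / 2 - 1) + 1 := by ring
      rw [hu, h, Real.rpow_add hxpos, Real.rpow_one]; norm_num
    have e2 : (1 + ξ ^ 2) ^ (-(n : ℝ) - 1) = u ^ 2 * (1 + ξ ^ 2) := by
      have h : (-(n : ℝ) - 1) = (-(n : ℝ) / 2 - 1) + ((-(n : ℝ) / 2 - 1) + 1) := by ring
      rw [hu, h, Real.rpow_add hxpos, Real.rpow_add hxpos, Real.rpow_one]; ring_nf
    have e3 : (1 + ξ ^ 2) ^ (((n : ℝ) + 2) / 2) = u⁻¹ := by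
      have h : ((n : ℝ) + 2) / 2 = -(-(n : ℝ) / 2 - 1) := by ring
      rw [hu, h, Real.rpow_neg (le_of_lt hxpos)]
    rw [e1, e2, e3]
    have hune : u ≠ 0 := ne_of_gt (Real.rpow_pos_of_pos hxpos _)
    rw [mul_div_assoc']
    push_cast
    field_simp
    ring
  refine ⟨fun ξ _ => key ξ, ?_⟩
  apply monotoneOn_of_deriv_nonneg (convex_Ici 0)
  · exact fun x _ => ((hΦdiff x).continuousAt).continuousWithinAt
  · exact fun x _ => ((hΦdiff x).differentiableAt).differentiableWithinAt
  · intro x hx'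
    rw [interior_Ici] at hx'
    have hΦpos : 0 < Φ x := by rw [hΦfun]; exact Real.sqrt_pos.2 (hGpos x)
    have hφnn : 0 ≤ φ x := by
      rw [hφ x]
      apply intervalIntegral.integral_nonneg (le_of_lt hx')
      intro t _
      positivity
    have hrhs : 0 ≤ (n : ℝ) * ((n : ℝ) - 1) * φ x / (1 + x ^ 2) ^ (((n : ℝ) + 2) / 2) := by
      have h1 : (0:ℝ) ≤ (n:ℝ) - 1 := by
        have h2 : (2:ℝ) ≤ (n:ℝ) := by exact_mod_cast hn
        linarith
      have h2 := Real.rpow_pos_of_pos (hx x) (((n : ℝ) + 2) / 2)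
      positivity
    by_contra hlt
    push_neg at hlt
    have hk := key x
    nlinarith [mul_pos hΦpos (neg_pos.2 hlt)]
end

section
/- For n ≥ 2, with φ(t) = ∫_0^t (1+τ²)^{-n/2} dτ and Φ(ξ) = √( (1+ξ²)^{-n} + ( (n-1)·φ(ξ) + ξ·(1+ξ²)^{-n/2} )² ), the supremum of Φ over all real ξ equals h_n := (n-1)·∫_0^∞ (1+τ²)^{-n/2} dτ. -/
/-!
With `n` relaxed to a real `s > 1`, write `w(τ) = (1 + τ²)^(-s/2)` and `A(ξ) = (s - 1) φ(ξ) + ξ w(ξ)`,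
so that `Φ² = (1 + ξ²)^(-s) + A²`.
Since `A' = s (1 + ξ²)^(-s/2 - 1)`, the two terms of `(Φ²)'` combine to
`2 s (s - 1) (1 + ξ²)^(-s/2 - 1) φ(ξ)`, which is `≥ 0` for `ξ ≥ 0`. As `φ` is odd, `Φ` is even and
nondecreasing on `[0, ∞)`, so its supremum is its limit at `+∞`; there `ξ w(ξ) ≤ (1 + ξ²)^((1 - s)/2)`
and `(1 + ξ²)^(-s)` vanish, while `φ(ξ) → ∫₀^∞ w` because `w` is integrable for `s > 1`.
-/

open MeasureTheory Filter Real Topology Set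

theorem iSup_eq_of_even_of_monotoneOn_of_tendsto {g : ℝ → ℝ} {L : ℝ} (heven : g.Even)
    (hmono : MonotoneOn g (Ici 0)) (hlim : Tendsto g atTop (𝓝 L)) : ⨆ x, g x = L := by
  have hle (x : ℝ) : g x ≤ L := by
    have habs : g |x| = g x := by
      rcases abs_choice x with h | h <;> rw [h]
      exact heven x
    rw [← habs]
    refine ge_of_tendsto hlim ?_
    filter_upwards [eventually_ge_atTop |x|] with y hy
    exact hmono (abs_nonneg x) ((abs_nonneg x).trans hy) hy
  exact le_antisymm (ciSup_le hle)
    (le_of_tendsto' hlim fun y => le_ciSup ⟨L, forall_mem_range.2 hle⟩ y)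

lemma one_add_sq_pos (x : ℝ) : 0 < 1 + x ^ 2 := by positivity

lemma hasDerivAt_one_add_sq_rpow (p x : ℝ) :
    HasDerivAt (fun x => (1 + x ^ 2) ^ p) (2 * p * x * (1 + x ^ 2) ^ (p - 1)) x := by
  have := ((hasDerivAt_pow 2 x).const_add 1).rpow_const (p := p) (Or.inl (one_add_sq_pos x).ne')
  convert this using 1
  push_cast
  ring

lemma tendsto_one_add_sq_rpow_neg_atTop {p : ℝ} (hp : 0 < p) :
    Tendsto (fun x : ℝ => (1 + x ^ 2) ^ (-p)) atTop (𝓝 0) :=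
  (tendsto_rpow_neg_atTop hp).comp <|
    tendsto_atTop_add_const_left _ _ (tendsto_pow_atTop two_ne_zero)

noncomputable def weight (s τ : ℝ) : ℝ := (1 + τ ^ 2) ^ (-s / 2)

noncomputable def weightPrimitive (s t : ℝ) : ℝ := ∫ τ in (0 : ℝ)..t, weight s τ

noncomputable def amplitude (s ξ : ℝ) : ℝ := (s - 1) * weightPrimitive s ξ + ξ * weight s ξ

/-- For `s = n` this is `Φ(ξ)²`. -/
noncomputable def phiSq (s ξ : ℝ) : ℝ := (1 + ξ ^ 2) ^ (-s) + amplitude s ξ ^ 2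

section

variable {s : ℝ}

lemma weight_pos (s τ : ℝ) : 0 < weight s τ := rpow_pos_of_pos (one_add_sq_pos τ) _

lemma continuous_weight (s : ℝ) : Continuous (weight s) :=
  (continuous_const.add (continuous_pow 2)).rpow_const fun τ => Or.inl (one_add_sq_pos τ).ne'

lemma even_weight (s : ℝ) : (weight s).Even := fun τ => by simp [weight]

lemma integrable_weight (hs : 1 < s) : Integrable (weight s) := by
  have := integrable_rpow_neg_one_add_norm_sq (E := ℝ) (μ := volume) (r := s) (by simpa using hs)
  exact (by simpa using this : Integrable fun τ : ℝ => (1 + τ ^ 2) ^ (-s / 2))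

lemma tendsto_mul_weight_atTop (hs : 1 < s) : Tendsto (fun ξ => ξ * weight s ξ) atTop (𝓝 0) := by
  refine squeeze_zero' ?_ ?_ (tendsto_one_add_sq_rpow_neg_atTop (p := (s - 1) / 2) (by linarith))
  · filter_upwards [eventually_ge_atTop 0] with ξ hξ
    exact mul_nonneg hξ (weight_pos s ξ).le
  · filter_upwards [eventually_ge_atTop 0] with ξ hξ
    have hξ_le : ξ ≤ (1 + ξ ^ 2) ^ (1 / 2 : ℝ) := by
      rw [← sqrt_eq_rpow]
      exact le_sqrt_of_sq_le (by linarith)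
    calc ξ * weight s ξ ≤ (1 + ξ ^ 2) ^ (1 / 2 : ℝ) * weight s ξ :=
          mul_le_mul_of_nonneg_right hξ_le (weight_pos s ξ).le
      _ = (1 + ξ ^ 2) ^ (-((s - 1) / 2)) := by
          rw [weight, ← rpow_add (one_add_sq_pos ξ)]
          ring_nf

lemma hasDerivAt_weightPrimitive (s x : ℝ) : HasDerivAt (weightPrimitive s) (weight s x) x :=
  intervalIntegral.integral_hasDerivAt_right ((continuous_weight s).intervalIntegrable 0 x)
    ((continuous_weight s).stronglyMeasurableAtFilter _ _) (continuous_weight s).continuousAt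

lemma odd_weightPrimitive (s : ℝ) : (weightPrimitive s).Odd := fun t => by
  simp only [weightPrimitive]
  conv_lhs => rw [← funext (even_weight s), intervalIntegral.integral_comp_neg]
  rw [neg_neg, neg_zero, intervalIntegral.integral_symm]

lemma weightPrimitive_nonneg (s : ℝ) {x : ℝ} (hx : 0 ≤ x) : 0 ≤ weightPrimitive s x :=
  intervalIntegral.integral_nonneg hx fun τ _ => (weight_pos s τ).le

lemma tendsto_weightPrimitive_atTop (hs : 1 < s) :
    Tendsto (weightPrimitive s) atTop (𝓝 (∫ τ in Ioi 0, weight s τ)) :=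
  intervalIntegral_tendsto_integral_Ioi 0 (integrable_weight hs).integrableOn tendsto_id

lemma hasDerivAt_amplitude (s x : ℝ) :
    HasDerivAt (amplitude s) (s * (1 + x ^ 2) ^ (-s / 2 - 1)) x := by
  have h := ((hasDerivAt_weightPrimitive s x).const_mul (s - 1)).add
    ((hasDerivAt_id x).mul (hasDerivAt_one_add_sq_rpow (-s / 2) x))
  have hsplit : (1 + x ^ 2) ^ (-s / 2) = (1 + x ^ 2) ^ (-s / 2 - 1) * (1 + x ^ 2) := by
    rw [← rpow_add_one (one_add_sq_pos x).ne']
    ring_nf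
  refine h.congr_deriv ?_
  simp only [weight, id, hsplit]
  ring

lemma odd_amplitude (s : ℝ) : (amplitude s).Odd := fun ξ => by
  simp only [amplitude, odd_weightPrimitive s ξ, even_weight s ξ]
  ring

lemma tendsto_amplitude_atTop (hs : 1 < s) :
    Tendsto (amplitude s) atTop (𝓝 ((s - 1) * ∫ τ in Ioi 0, weight s τ)) := by
  have h := ((tendsto_weightPrimitive_atTop hs).const_mul (s - 1)).add
    (tendsto_mul_weight_atTop hs)
  rwa [add_zero] at h

lemma hasDerivAt_phiSq (s x : ℝ) :
    HasDerivAt (phiSq s)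
      (2 * s * (s - 1) * (1 + x ^ 2) ^ (-s / 2 - 1) * weightPrimitive s x) x := by
  have h := (hasDerivAt_one_add_sq_rpow (-s) x).add ((hasDerivAt_amplitude s x).pow 2)
  have hsplit : (1 + x ^ 2) ^ (-s - 1) = (1 + x ^ 2) ^ (-s / 2 - 1) * weight s x := by
    rw [weight, ← rpow_add (one_add_sq_pos x)]
    ring_nf
  refine h.congr_deriv ?_
  simp only [amplitude, hsplit]
  ring

lemma even_phiSq (s : ℝ) : (phiSq s).Even := fun ξ => by
  simp only [phiSq, odd_amplitude s ξ, neg_sq]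

lemma monotoneOn_phiSq (hs : 1 ≤ s) : MonotoneOn (phiSq s) (Ici 0) := by
  refine monotoneOn_of_hasDerivWithinAt_nonneg (convex_Ici 0)
    (fun x _ => (hasDerivAt_phiSq s x).continuousAt.continuousWithinAt)
    (fun x _ => (hasDerivAt_phiSq s x).hasDerivWithinAt) fun x hx => ?_
  rw [interior_Ici] at hx
  have := weightPrimitive_nonneg s hx.le
  have := rpow_pos_of_pos (one_add_sq_pos x) (-s / 2 - 1)
  have : 0 ≤ 2 * s * (s - 1) := by nlinarith
  positivity

lemma tendsto_phiSq_atTop (hs : 1 < s) :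
    Tendsto (phiSq s) atTop (𝓝 (((s - 1) * ∫ τ in Ioi 0, weight s τ) ^ 2)) := by
  have h := (tendsto_one_add_sq_rpow_neg_atTop (by linarith)).add
    ((tendsto_amplitude_atTop hs).pow 2)
  rwa [zero_add] at h

end

theorem sup_Phi_eq_h_n (n : ℕ) (hn : 2 ≤ n) (φ Φ : ℝ → ℝ)
    (hφ : ∀ t : ℝ, φ t = ∫ τ in (0:ℝ)..t, (1 + τ ^ 2) ^ (-(n : ℝ) / 2))
    (hΦ : ∀ ξ : ℝ, Φ ξ = Real.sqrt ((1 + ξ ^ 2) ^ (-(n : ℝ)) +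
      (((n : ℝ) - 1) * φ ξ + ξ * (1 + ξ ^ 2) ^ (-(n : ℝ) / 2)) ^ 2)) :
    (⨆ ξ : ℝ, Φ ξ) = ((n : ℝ) - 1) * ∫ τ in Set.Ioi (0 : ℝ), (1 + τ ^ 2) ^ (-(n : ℝ) / 2) := by
  have hn : (1 : ℝ) < n := by exact_mod_cast hn
  obtain rfl : Φ = fun ξ => √(phiSq n ξ) := funext fun ξ => by rw [hΦ, hφ]; rfl
  have hlim_nonneg : 0 ≤ ((n : ℝ) - 1) * ∫ τ in Ioi 0, weight n τ :=
    mul_nonneg (by linarith)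
      (setIntegral_nonneg measurableSet_Ioi fun τ _ => (weight_pos n τ).le)
  refine iSup_eq_of_even_of_monotoneOn_of_tendsto (fun ξ => by rw [even_phiSq n ξ])
    (fun x hx y hy hxy => sqrt_le_sqrt (monotoneOn_phiSq hn.le hx hy hxy)) ?_
  have h := (tendsto_phiSq_atTop hn).sqrt
  rwa [sqrt_sq hlim_nonneg] at h
end

section
/- Suppose nonnegative functions f_j : (0,∞) → (0,∞), j = 1, …, N, satisfy f_j(t) ≤ C·t for all t and some constant C > 0, and for all R > 0 and β > 1: Σ_{j=1}^N f_j(R)/f_j(βR) ≤ (n+1)·(β/(β−1))^n. Then N ≤ (n+1)·β·(β/(β−1))^n for every β > 1. -/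
theorem telescoping_bound (n N : ℕ) (hn : 1 ≤ n) (hN : 1 ≤ N)
    (f : Fin N → ℝ → ℝ) (C : ℝ) (hC : 0 < C)
    (hf_pos : ∀ j, ∀ t : ℝ, 0 < t → 0 < f j t)
    (hf_lin : ∀ j, ∀ t : ℝ, 0 < t → f j t ≤ C * t)
    (hsum : ∀ R : ℝ, 0 < R → ∀ β : ℝ, 1 < β →
      ∑ j : Fin N, f j R / f j (β * R) ≤ ((n : ℝ) + 1) * (β / (β - 1)) ^ n) :
    ∀ β : ℝ, 1 < β → (N : ℝ) ≤ ((n : ℝ) + 1) * β * (β / (β - 1)) ^ n := by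
  intro β hβ
  have hβ0 : (0:ℝ) < β := lt_trans one_pos hβ
  have hN0 : (0:ℝ) < N := by exact_mod_cast hN
  set A : ℝ := ((n : ℝ) + 1) * (β / (β - 1)) ^ n with hA
  clear_value A
  have hApos : 0 < A := by
    rw [hA]
    exact mul_pos (by positivity) (pow_pos (div_pos hβ0 (by linarith)) n)
  -- Step: product inequality via AM-GM
  have step : ∀ R : ℝ, 0 < R →
      (∏ j : Fin N, f j R) ≤ (A / N) ^ N * ∏ j : Fin N, f j (β * R) := by
    intro R hR
    have hβR : 0 < β * R := mul_pos hβ0 hR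
    set x : Fin N → ℝ := fun j => f j R / f j (β * R) with hx
    have hxpos : ∀ j, 0 < x j := fun j =>
      div_pos (hf_pos j R hR) (hf_pos j (β * R) hβR)
    have amgm : ∏ j : Fin N, (x j) ^ ((N:ℝ)⁻¹) ≤ ∑ j : Fin N, (N:ℝ)⁻¹ * x j :=
      Real.geom_mean_le_arith_mean_weighted Finset.univ (fun _ => (N:ℝ)⁻¹) x
        (fun _ _ => by positivity)
        (by simp [Finset.sum_const, Finset.card_univ]; field_simp)
        (fun j _ => (hxpos j).le)
    have hsum' : ∑ j : Fin N, (N:ℝ)⁻¹ * x j ≤ A / N := by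
      rw [← Finset.mul_sum, div_eq_inv_mul, hA]
      exact mul_le_mul_of_nonneg_left (hsum R hR β hβ) (by positivity)
    have key : ∏ j : Fin N, x j ≤ (A / N) ^ N := by
      have hGnn : 0 ≤ ∏ j : Fin N, x j := Finset.prod_nonneg fun j _ => (hxpos j).le
      have h1 : ∏ j : Fin N, (x j) ^ ((N:ℝ)⁻¹) = (∏ j : Fin N, x j) ^ ((N:ℝ)⁻¹) :=
        Real.finset_prod_rpow _ _ (fun j _ => (hxpos j).le) _
      have h2 : ((∏ j : Fin N, x j) ^ ((N:ℝ)⁻¹)) ^ N ≤ (A / N) ^ N :=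
        pow_le_pow_left₀ (Real.rpow_nonneg hGnn _) (h1 ▸ (amgm.trans hsum')) N
      rwa [Real.rpow_inv_natCast_pow hGnn (by omega)] at h2
    have hprodpos : 0 < ∏ j : Fin N, f j (β * R) :=
      Finset.prod_pos fun j _ => hf_pos j (β * R) hβR
    have : ∏ j : Fin N, x j = (∏ j : Fin N, f j R) / ∏ j : Fin N, f j (β * R) := by
      simp [hx, Finset.prod_div_distrib]
    rw [this, div_le_iff₀ hprodpos] at key
    linarith [key]
  -- Telescoping
  have tele : ∀ m : ℕ, (∏ j : Fin N, f j 1) ≤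
      ((A / N) ^ N) ^ m * ∏ j : Fin N, f j (β ^ m) := by
    intro m
    induction m with
    | zero => simp
    | succ m ih =>
      have hβm : (0:ℝ) < β ^ m := pow_pos hβ0 m
      have := step (β ^ m) hβm
      rw [← pow_succ'] at this  -- β * β ^ m = β ^ (m+1)? check
      calc (∏ j : Fin N, f j 1) ≤ ((A / N) ^ N) ^ m * ∏ j : Fin N, f j (β ^ m) := ih
        _ ≤ ((A / N) ^ N) ^ m * ((A / N) ^ N * ∏ j : Fin N, f j (β ^ (m+1))) := by
            apply mul_le_mul_of_nonneg_left _ (by positivity)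
            exact this
        _ = ((A / N) ^ N) ^ (m+1) * ∏ j : Fin N, f j (β ^ (m+1)) := by ring
  -- bound on prod f j (β^m)
  have hub : ∀ m : ℕ, (∏ j : Fin N, f j (β ^ m)) ≤ (C * β ^ m) ^ N := by
    intro m
    have hβm : (0:ℝ) < β ^ m := pow_pos hβ0 m
    calc (∏ j : Fin N, f j (β ^ m)) ≤ ∏ _j : Fin N, (C * β ^ m) :=
          Finset.prod_le_prod (fun j _ => (hf_pos j _ hβm).le)
            (fun j _ => hf_lin j _ hβm)
      _ = (C * β ^ m) ^ N := by simp
  by_contra h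
  push_neg at h
  have hq : A * β / N < 1 := by
    rw [div_lt_one hN0]
    calc A * β = ((n : ℝ) + 1) * β * (β / (β - 1)) ^ n := by rw [hA]; ring
      _ < N := h
  have hq0 : 0 ≤ A * β / N := by positivity
  have hP : 0 < ∏ j : Fin N, f j 1 := Finset.prod_pos fun j _ => hf_pos j 1 one_pos
  obtain ⟨m, hm⟩ := exists_pow_lt_of_lt_one
    (show (0:ℝ) < (∏ j : Fin N, f j 1) / C ^ N by positivity) hq
  have hchain : (∏ j : Fin N, f j 1) ≤ C ^ N * (A * β / N) ^ (N * m) := by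
    calc (∏ j : Fin N, f j 1) ≤ ((A / N) ^ N) ^ m * ∏ j : Fin N, f j (β ^ m) := tele m
      _ ≤ ((A / N) ^ N) ^ m * (C * β ^ m) ^ N := by
          exact mul_le_mul_of_nonneg_left (hub m) (by positivity)
      _ = C ^ N * (A * β / N) ^ (N * m) := by
          have e1 : ((A / ↑N) ^ N) ^ m = (A / ↑N) ^ (N * m) := (pow_mul _ N m).symm
          have e2 : (C * β ^ m) ^ N = C ^ N * β ^ (N * m) := by
            rw [mul_pow, ← pow_mul, Nat.mul_comm]
          have e3 : (A * β / ↑N) ^ (N * m) = (A / ↑N) ^ (N * m) * β ^ (N * m) := by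
            rw [← mul_pow]; ring_nf
          rw [e1, e2, e3]; ring
  have hle : (A * β / N) ^ (N * m) ≤ (A * β / N) ^ m :=
    pow_le_pow_of_le_one hq0 hq.le (Nat.le_mul_of_pos_left m hN)
  have : (∏ j : Fin N, f j 1) < ∏ j : Fin N, f j 1 := by
    calc (∏ j : Fin N, f j 1) ≤ C ^ N * (A * β / N) ^ (N * m) := hchain
      _ ≤ C ^ N * (A * β / N) ^ m := mul_le_mul_of_nonneg_left hle (by positivity)
      _ < C ^ N * ((∏ j : Fin N, f j 1) / C ^ N) := by
          exact mul_lt_mul_of_pos_left hm (by positivity)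
      _ = ∏ j : Fin N, f j 1 := by field_simp
  exact lt_irrefl _ this
end
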